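/- arXiv:2304.11908 — 3 statements merged into one kernel-verified Lean document; each statement's English description precedes it below -/
import Mathlib

section
/- Let V and Q be real Hilbert spaces, a : V × V → ℝ a bounded symmetric bilinear form, and b : V × Q → ℝ a bounded bilinear form. Suppose a is coercive on the kernel K = {v ∈ V : b(v,q) = 0 for all q ∈ Q} with constant α > 0, and b satisfies the inf-sup condition with constant β > 0 (i.e., for every q ∈ Q there exists v ∈ V, v ≠ 0, with b(v,q) ≥ β ‖q‖_Q ‖v‖_V). Then for every f ∈ V* and g ∈ Q* the saddle point problem: find (u, λ) ∈ V × Q with a(u,v) + b(v,λ) = f(v) for all v ∈ V and b(u,q) = g(q) for all q ∈ Q, has a unique solution, and ‖u‖_V + ‖λ‖_Q ≤ C(‖f‖_{V*} + ‖g‖_{Q*}) with C depending only on α, β and the continuity constants of a and b. -/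
open InnerProductSpace RealInnerProductSpace ContinuousLinearMap

section Aux

variable {V Q : Type*} [NormedAddCommGroup V] [InnerProductSpace ℝ V] [CompleteSpace V]
  [NormedAddCommGroup Q] [InnerProductSpace ℝ Q] [CompleteSpace Q]

/-- Riesz representation of a bounded bilinear form as an operator. -/
lemma aux_repB (b : V →ₗ[ℝ] Q →ₗ[ℝ] ℝ) (Cb : ℝ)
    (hb_bdd : ∀ v q, |b v q| ≤ Cb * ‖v‖ * ‖q‖) :
    ∃ B : V →L[ℝ] Q, ∀ v q, ⟪B v, q⟫_ℝ = b v q := by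
  set B2 : V →L[ℝ] Q →L[ℝ] ℝ := LinearMap.mkContinuous₂ b Cb (fun u v => by
    simpa [Real.norm_eq_abs] using hb_bdd u v) with hB2def
  refine ⟨((InnerProductSpace.toDual ℝ Q).symm.toContinuousLinearEquiv :
      (Q →L[ℝ] ℝ) ≃L[ℝ] Q).toContinuousLinearMap.comp B2, fun v q => ?_⟩
  have : ⟪(InnerProductSpace.toDual ℝ Q).symm (B2 v), q⟫_ℝ = B2 v q :=
    InnerProductSpace.toDual_symm_apply
  rw [ContinuousLinearMap.comp_apply]
  exact this

/-- Surjectivity of B ∘ B* when B* is bounded below. -/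
lemma aux_surj (B : V →L[ℝ] Q) (β : ℝ) (hβ : 0 < β)
    (hlow : ∀ q : Q, β * ‖q‖ ≤ ‖ContinuousLinearMap.adjoint B q‖) (y : Q) :
    ∃ p : Q, B (ContinuousLinearMap.adjoint B p) = y := by
  set T : Q →L[ℝ] Q := B.comp (ContinuousLinearMap.adjoint B) with hT
  have hinner : ∀ q, ⟪T q, q⟫_ℝ = ‖ContinuousLinearMap.adjoint B q‖ ^ 2 := by
    intro q
    rw [hT, ContinuousLinearMap.comp_apply, real_inner_comm,
      ← ContinuousLinearMap.adjoint_inner_left, real_inner_self_eq_norm_sq]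
  have hco : ∀ q, β ^ 2 * ‖q‖ ^ 2 ≤ ⟪T q, q⟫_ℝ := by
    intro q
    rw [hinner]
    calc β ^ 2 * ‖q‖ ^ 2 = (β * ‖q‖) ^ 2 := by ring
      _ ≤ ‖ContinuousLinearMap.adjoint B q‖ ^ 2 :=
        pow_le_pow_left₀ (by positivity) (hlow q) 2
  have hbb : ∀ q, β ^ 2 * ‖q‖ ≤ ‖T q‖ := by
    intro q
    rcases eq_or_ne q 0 with rfl | hq
    · simp
    · have h1 := hco q
      have h2 : ⟪T q, q⟫_ℝ ≤ ‖T q‖ * ‖q‖ := real_inner_le_norm _ _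
      have hq0 : 0 < ‖q‖ := norm_pos_iff.mpr hq
      nlinarith
  have hanti : AntilipschitzWith ((β ^ 2)⁻¹.toNNReal) T := by
    apply ContinuousLinearMap.antilipschitz_of_bound
    intro q
    have h := hbb q
    rw [Real.coe_toNNReal _ (by positivity)]
    calc ‖q‖ = (β ^ 2)⁻¹ * (β ^ 2 * ‖q‖) := by field_simp
      _ ≤ (β ^ 2)⁻¹ * ‖T q‖ := by gcongr
  have hclosed : IsClosed (LinearMap.range (T : Q →ₗ[ℝ] Q) : Set Q) := by
    have := hanti.isClosed_range T.uniformContinuous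
    simpa [LinearMap.coe_range] using this
  have hrange : LinearMap.range (T : Q →ₗ[ℝ] Q) = ⊤ := by
    haveI : CompleteSpace (LinearMap.range (T : Q →ₗ[ℝ] Q)) := hclosed.completeSpace_coe
    rw [← (LinearMap.range (T : Q →ₗ[ℝ] Q)).orthogonal_orthogonal, Submodule.eq_top_iff']
    intro v w hw
    obtain rfl : w = 0 := by
      have h0 : ⟪T w, w⟫_ℝ = 0 := hw _ (LinearMap.mem_range.mpr ⟨w, rfl⟩)
      have h1 := hco w
      have hb2 : (0:ℝ) < β ^ 2 := by positivity
      have h5 : ‖w‖ ^ 2 ≤ 0 := by nlinarith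
      have h6 : ‖w‖ = 0 := by nlinarith [norm_nonneg w]
      exact norm_eq_zero.mp h6
    exact inner_zero_left _
  obtain ⟨p, hp⟩ := LinearMap.range_eq_top.mp hrange y
  exact ⟨p, hp⟩

/-- Lax-Milgram on the kernel of B. -/
lemma aux_ker (A : V →L[ℝ] V →L[ℝ] ℝ) (B : V →L[ℝ] Q) (α : ℝ) (hα : 0 < α)
    (hcoer : ∀ v : V, B v = 0 → α * ‖v‖ ^ 2 ≤ A v v) (F : V →L[ℝ] ℝ) :
    ∃ w : V, B w = 0 ∧ ∀ y : V, B y = 0 → A w y = F y := by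
  set K : Submodule ℝ V := LinearMap.ker (B : V →ₗ[ℝ] Q) with hK
  haveI : CompleteSpace K := (isClosed_ker B).completeSpace_coe
  set ι : K →L[ℝ] V := K.subtypeL with hι
  set aK : K →L[ℝ] K →L[ℝ] ℝ := ((A.comp ι).flip.comp ι).flip with haK
  have haKapp : ∀ x y : K, aK x y = A (x : V) (y : V) := fun x y => rfl
  have hcoK : IsCoercive aK := by
    refine ⟨α, hα, fun x => ?_⟩
    have hx : B (x : V) = 0 := LinearMap.mem_ker.mp x.2
    have h := hcoer (x : V) hx
    have hn : ‖(x : V)‖ = ‖x‖ := rfl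
    rw [haKapp]
    calc α * ‖x‖ * ‖x‖ = α * ‖(x : V)‖ ^ 2 := by rw [hn]; ring
      _ ≤ A (x : V) (x : V) := h
  set E2 := hcoK.continuousLinearEquivOfBilin with hE2
  set r : K := (InnerProductSpace.toDual ℝ K).symm (F.comp ι) with hr
  refine ⟨(E2.symm r : K), LinearMap.mem_ker.mp (E2.symm r).2, fun y hy => ?_⟩
  have h1 : ⟪E2 (E2.symm r), (⟨y, LinearMap.mem_ker.mpr hy⟩ : K)⟫_ℝ
      = aK (E2.symm r) ⟨y, LinearMap.mem_ker.mpr hy⟩ :=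
    hcoK.continuousLinearEquivOfBilin_apply _ _
  rw [E2.apply_symm_apply, haKapp] at h1
  have h2 : ⟪r, (⟨y, LinearMap.mem_ker.mpr hy⟩ : K)⟫_ℝ = F y := by
    rw [hr]
    exact InnerProductSpace.toDual_symm_apply
  rw [h1] at h2
  exact h2

end Aux

set_option maxHeartbeats 1600000 in
/-- Babuška–Brezzi: existence, uniqueness and stability for the abstract
saddle point problem with kernel ellipticity and inf-sup condition. -/
theorem stmt0
    {V Q : Type*} [NormedAddCommGroup V] [InnerProductSpace ℝ V] [CompleteSpace V]
    [NormedAddCommGroup Q] [InnerProductSpace ℝ Q] [CompleteSpace Q]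
    (a : V →ₗ[ℝ] V →ₗ[ℝ] ℝ) (b : V →ₗ[ℝ] Q →ₗ[ℝ] ℝ)
    (Ca : ℝ) (hCa : 0 < Ca) (ha_bdd : ∀ u v, |a u v| ≤ Ca * ‖u‖ * ‖v‖)
    (ha_symm : ∀ u v, a u v = a v u)
    (Cb : ℝ) (hCb : 0 < Cb) (hb_bdd : ∀ v q, |b v q| ≤ Cb * ‖v‖ * ‖q‖)
    (α : ℝ) (hα : 0 < α)
    (hcoer : ∀ v : V, (∀ q : Q, b v q = 0) → α * ‖v‖ ^ 2 ≤ a v v)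
    (β : ℝ) (hβ : 0 < β)
    (hinfsup : ∀ q : Q, ∃ v : V, v ≠ 0 ∧ β * ‖q‖ * ‖v‖ ≤ b v q) :
    ∃ C : ℝ, 0 < C ∧ ∀ (f : V →L[ℝ] ℝ) (g : Q →L[ℝ] ℝ),
      (∃! p : V × Q, (∀ v : V, a p.1 v + b v p.2 = f v) ∧ (∀ q : Q, b p.1 q = g q)) ∧
      ∀ (u : V) (lam : Q), (∀ v : V, a u v + b v lam = f v) → (∀ q : Q, b u q = g q) →
        ‖u‖ + ‖lam‖ ≤ C * (‖f‖ + ‖g‖) := by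
  -- continuous version of a
  set A : V →L[ℝ] V →L[ℝ] ℝ := LinearMap.mkContinuous₂ a Ca (fun u v => by
    simpa [Real.norm_eq_abs] using ha_bdd u v) with hAdef
  have hA : ∀ u v, A u v = a u v := fun u v => rfl
  have hAnorm : ∀ u : V, ‖A u‖ ≤ Ca * ‖u‖ := fun u =>
    ContinuousLinearMap.opNorm_le_bound _ (by positivity) (fun v => by
      rw [hA, Real.norm_eq_abs]; exact ha_bdd u v)
  -- operator representing b
  obtain ⟨B, hB⟩ := aux_repB b Cb hb_bdd
  set Bs := ContinuousLinearMap.adjoint B with hBsdef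
  have hBs : ∀ (q : Q) (v : V), ⟪Bs q, v⟫_ℝ = b v q := fun q v => by
    rw [hBsdef, ContinuousLinearMap.adjoint_inner_left, real_inner_comm, hB]
  have hlow : ∀ q : Q, β * ‖q‖ ≤ ‖Bs q‖ := by
    intro q
    obtain ⟨v, hv0, hv⟩ := hinfsup q
    have hvpos : (0:ℝ) < ‖v‖ := norm_pos_iff.mpr hv0
    have h1 : β * ‖q‖ * ‖v‖ ≤ ‖Bs q‖ * ‖v‖ := by
      calc β * ‖q‖ * ‖v‖ ≤ b v q := hv
        _ = ⟪Bs q, v⟫_ℝ := (hBs q v).symm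
        _ ≤ ‖Bs q‖ * ‖v‖ := real_inner_le_norm _ _
    exact le_of_mul_le_mul_right h1 hvpos
  have hkerb : ∀ v : V, B v = 0 → ∀ q, b v q = 0 := fun v hv q => by
    rw [← hB, hv, inner_zero_left]
  have hkerb' : ∀ v : V, (∀ q, b v q = 0) → B v = 0 := fun v hv => by
    have h0 : ⟪B v, B v⟫_ℝ = 0 := by rw [hB]; exact hv _
    exact inner_self_eq_zero.mp h0
  have hcoerA : ∀ v : V, B v = 0 → α * ‖v‖ ^ 2 ≤ A v v := fun v hv => by
    rw [hA]; exact hcoer v (hkerb v hv)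
  set C : ℝ := (β * β + α * β + 2 * Ca * β + Ca * α + Ca * Ca) / (α * β * β) with hC
  have hCpos : 0 < C := by rw [hC]; positivity
  refine ⟨C, hCpos, fun f g => ?_⟩
  -- construction of the solution
  set g' := (InnerProductSpace.toDual ℝ Q).symm g with hg'def
  have hg' : ∀ q, ⟪g', q⟫_ℝ = g q := fun q => InnerProductSpace.toDual_symm_apply
  have hg'norm : ‖g'‖ = ‖g‖ := LinearIsometryEquiv.norm_map _ _
  obtain ⟨p, hp⟩ := aux_surj B β hβ hlow g'
  set u₀ := Bs p with hu₀def
  obtain ⟨w, hwK, hwsolve⟩ := aux_ker A B α hα hcoerA (f - A u₀)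
  set u := u₀ + w with hudef
  have hBu : B u = g' := by rw [hudef, map_add, hwK, add_zero, hu₀def]; exact hp
  have eq2 : ∀ q, b u q = g q := fun q => by rw [← hB, hBu, hg']
  set r2 := (InnerProductSpace.toDual ℝ V).symm (f - A u) with hr2def
  have hr2 : ∀ v, ⟪r2, v⟫_ℝ = f v - A u v := fun v => by
    have h := (InnerProductSpace.toDual_symm_apply :
      ⟪(InnerProductSpace.toDual ℝ V).symm (f - A u), v⟫_ℝ = (f - A u) v)
    rw [ContinuousLinearMap.sub_apply] at h
    rw [hr2def]
    exact h
  have hr2norm : ‖r2‖ ≤ ‖f‖ + Ca * ‖u‖ := by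
    have h1 : ‖r2‖ = ‖f - A u‖ := LinearIsometryEquiv.norm_map _ _
    have h2 : ‖f - A u‖ ≤ ‖f‖ + ‖A u‖ := norm_sub_le _ _
    have h3 := hAnorm u
    linarith
  have hr2K : ∀ y : V, B y = 0 → ⟪r2, y⟫_ℝ = 0 := by
    intro y hy
    rw [hr2 y]
    have h1 : A w y = (f - A u₀) y := hwsolve y hy
    rw [ContinuousLinearMap.sub_apply] at h1
    have h2 : A u y = A u₀ y + A w y := by
      rw [hudef, map_add, ContinuousLinearMap.add_apply]
    linarith
  obtain ⟨lam, hlam⟩ := aux_surj B β hβ hlow (B r2)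
  have hBslam : Bs lam = r2 := by
    have hd : B (Bs lam - r2) = 0 := by
      rw [map_sub, hBsdef] at *
      rw [hlam, sub_self]
    have h1 : ⟪Bs lam - r2, Bs lam - r2⟫_ℝ = 0 := by
      rw [inner_sub_left]
      have ha' : ⟪Bs lam, Bs lam - r2⟫_ℝ = 0 := by
        rw [hBsdef, ContinuousLinearMap.adjoint_inner_left, ← hBsdef, hd, inner_zero_right]
      have hb' : ⟪r2, Bs lam - r2⟫_ℝ = 0 := hr2K _ hd
      rw [ha', hb', sub_zero]
    exact sub_eq_zero.mp (inner_self_eq_zero.mp h1)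
  have eq1 : ∀ v, a u v + b v lam = f v := by
    intro v
    have h1 : b v lam = ⟪Bs lam, v⟫_ℝ := (hBs lam v).symm
    rw [← hA, h1, hBslam, hr2 v]
    ring
  clear_value u r2 u₀ g' Bs C A
  -- norm bounds
  have hu₀norm : β * ‖u₀‖ ≤ ‖g‖ := by
    have e1 : ‖u₀‖ ^ 2 = ⟪p, g'⟫_ℝ := by
      rw [← real_inner_self_eq_norm_sq, hu₀def, hBsdef,
        ContinuousLinearMap.adjoint_inner_left, ← hBsdef, ← hu₀def, hp]
    have e2 : ⟪p, g'⟫_ℝ ≤ ‖p‖ * ‖g‖ := by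
      calc ⟪p, g'⟫_ℝ ≤ ‖p‖ * ‖g'‖ := real_inner_le_norm _ _
        _ = ‖p‖ * ‖g‖ := by rw [hg'norm]
    have e4 : β * ‖p‖ ≤ ‖u₀‖ := by rw [hu₀def]; exact hlow p
    rcases eq_or_lt_of_le (norm_nonneg u₀) with h0 | hpos
    · rw [← h0, mul_zero]; exact norm_nonneg g
    · have e5 : β * ‖u₀‖ * ‖u₀‖ ≤ ‖g‖ * ‖u₀‖ := by
        linarith [mul_le_mul_of_nonneg_left e4 (norm_nonneg g),
          mul_le_mul_of_nonneg_left (e1 ▸ e2 : ‖u₀‖ ^ 2 ≤ ‖p‖ * ‖g‖) hβ.le]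
      exact le_of_mul_le_mul_right e5 hpos
  have hwnorm : α * ‖w‖ ≤ ‖f‖ + Ca * ‖u₀‖ := by
    have e1 : α * ‖w‖ ^ 2 ≤ A w w := hcoerA w hwK
    have e2 : A w w = f w - A u₀ w := by
      have h := hwsolve w hwK
      rw [ContinuousLinearMap.sub_apply] at h
      exact h
    have e3 : f w ≤ ‖f‖ * ‖w‖ := by
      calc f w ≤ |f w| := le_abs_self _
        _ = ‖f w‖ := (Real.norm_eq_abs _).symm
        _ ≤ ‖f‖ * ‖w‖ := f.le_opNorm w
    have e4 : -(A u₀ w) ≤ Ca * ‖u₀‖ * ‖w‖ := by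
      rw [hA]
      linarith [(abs_le.mp (ha_bdd u₀ w)).1]
    rcases eq_or_lt_of_le (norm_nonneg w) with h0 | hpos
    · rw [← h0, mul_zero]; positivity
    · have e5 : α * ‖w‖ * ‖w‖ ≤ (‖f‖ + Ca * ‖u₀‖) * ‖w‖ := by linarith
      exact le_of_mul_le_mul_right e5 hpos
  have hunorm : ‖u‖ ≤ ‖u₀‖ + ‖w‖ := by rw [hudef]; exact norm_add_le _ _
  have hlamnorm : β * ‖lam‖ ≤ ‖f‖ + Ca * ‖u‖ := by
    have e1 := hlow lam
    rw [hBslam] at e1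
    linarith [hr2norm]
  have hfinal : ‖u‖ + ‖lam‖ ≤ C * (‖f‖ + ‖g‖) := by
    have h3 : α * β * ‖w‖ ≤ β * ‖f‖ + Ca * ‖g‖ := by
      linarith [mul_le_mul_of_nonneg_left hwnorm hβ.le,
        mul_le_mul_of_nonneg_left hu₀norm hCa.le]
    have h4 : α * β * ‖u‖ ≤ β * ‖f‖ + (α + Ca) * ‖g‖ := by
      linarith [mul_le_mul_of_nonneg_left hunorm (mul_pos hα hβ).le,
        mul_le_mul_of_nonneg_left hu₀norm hα.le, h3]
    have h5 : α * β * β * ‖lam‖ ≤ α * β * ‖f‖ + Ca * (β * ‖f‖ + (α + Ca) * ‖g‖) := by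
      linarith [mul_le_mul_of_nonneg_left hlamnorm (mul_pos hα hβ).le,
        mul_le_mul_of_nonneg_left h4 hCa.le]
    have h6 : α * β * β * ‖u‖ ≤ β * (β * ‖f‖ + (α + Ca) * ‖g‖) :=
      by linarith [mul_le_mul_of_nonneg_left h4 hβ.le]
    have hM : α * β * β * (‖u‖ + ‖lam‖) ≤
        (β * β + α * β + 2 * Ca * β + Ca * α + Ca * Ca) * (‖f‖ + ‖g‖) := by
      linarith [h5, h6,
        mul_nonneg (show (0:ℝ) ≤ Ca * β + Ca * α + Ca * Ca by positivity) (norm_nonneg f),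
        mul_nonneg (show (0:ℝ) ≤ β * β + Ca * β by positivity) (norm_nonneg g)]
    rw [hC, div_mul_eq_mul_div, le_div_iff₀ (by positivity)]
    linarith [hM]
  -- uniqueness
  have huniq : ∀ p' : V × Q,
      ((∀ v : V, a p'.1 v + b v p'.2 = f v) ∧ (∀ q : Q, b p'.1 q = g q)) → p' = (u, lam) := by
    rintro ⟨u', lam'⟩ ⟨h1, h2⟩
    have hbd : ∀ q, b (u' - u) q = 0 := by
      intro q
      rw [map_sub, LinearMap.sub_apply, h2 q, eq2 q, sub_self]
    have hdd : a (u' - u) (u' - u) = 0 := by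
      have e1 := h1 (u' - u)
      have e2 := eq1 (u' - u)
      have e3 : b (u' - u) lam' - b (u' - u) lam = 0 := by
        rw [hbd, hbd, sub_self]
      have e4 : a (u' - u) (u' - u) = a u' (u' - u) - a u (u' - u) := by
        have := map_sub a u' u
        rw [this, LinearMap.sub_apply]
      linarith
    have hd0 : u' = u := by
      have e1 := hcoer (u' - u) hbd
      rw [hdd] at e1
      have e2 : ‖u' - u‖ ^ 2 ≤ 0 := le_of_mul_le_mul_left (by linarith) hα
      have e3 : ‖u' - u‖ ^ 2 = 0 := le_antisymm e2 (by positivity)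
      have e4 : ‖u' - u‖ = 0 := pow_eq_zero_iff two_ne_zero |>.mp e3
      exact sub_eq_zero.mp (norm_eq_zero.mp e4)
    have hld : ∀ v, b v (lam' - lam) = 0 := by
      intro v
      have e1 := h1 v
      have e2 := eq1 v
      rw [hd0] at e1
      have : b v lam' - b v lam = 0 := by linarith
      rw [map_sub]
      exact this
    have hBsl : Bs (lam' - lam) = 0 := by
      refine ext_inner_right ℝ fun v => ?_
      rw [hBs, hld v, inner_zero_left]
    have : lam' = lam := by
      have e1 := hlow (lam' - lam)
      rw [hBsl, norm_zero] at e1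
      have e2' : ‖lam' - lam‖ ≤ 0 := le_of_mul_le_mul_left (by linarith) hβ
      have e2 : ‖lam' - lam‖ = 0 := le_antisymm e2' (norm_nonneg _)
      exact sub_eq_zero.mp (norm_eq_zero.mp e2)
    rw [hd0, this]
  refine ⟨⟨(u, lam), ⟨eq1, eq2⟩, huniq⟩, ?_⟩
  intro u' lam' h1 h2
  have h := huniq (u', lam') ⟨h1, h2⟩
  rw [show u' = u from congrArg Prod.fst h, show lam' = lam from congrArg Prod.snd h]
  exact hfinal
end

section
/- Let V_h, Q_h be finite-dimensional subspaces of Hilbert spaces V and Q respectively, a : V × V → ℝ a bounded bilinear form coercive with constant α > 0 on the discrete kernel K_h = {v_h ∈ V_h : b(v_h, q_h) = 0 for all q_h ∈ Q_h}, and b : V × Q → ℝ a bounded bilinear form satisfying the discrete inf-sup condition with constant β > 0 on V_h × Q_h. Let (u, λ) ∈ V × Q solve the continuous saddle point problem and (u_h, λ_h) ∈ V_h × Q_h the corresponding Galerkin discrete problem. Then ‖u − u_h‖_V + ‖λ − λ_h‖_Q ≤ C inf_{v_h ∈ V_h, μ_h ∈ Q_h} (‖u − v_h‖_V + ‖λ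 − μ_h‖_Q), where C depends only on α, β and the continuity constants of a and b. -/
open scoped RealInnerProductSpace

/-- From the discrete inf-sup condition: any functional of the form `b z ·` on `Qh`
can be represented by some `w ∈ Vh` with norm bound. -/
lemma aux_surj_s8 {V Q : Type*} [NormedAddCommGroup V] [InnerProductSpace ℝ V]
    [NormedAddCommGroup Q] [InnerProductSpace ℝ Q]
    (Vh : Submodule ℝ V) (Qh : Submodule ℝ Q)
    [FiniteDimensional ℝ Vh] [FiniteDimensional ℝ Qh]
    (b : V →ₗ[ℝ] Q →ₗ[ℝ] ℝ)
    (Cb : ℝ) (hCb : 0 < Cb) (hb_bdd : ∀ v q, |b v q| ≤ Cb * ‖v‖ * ‖q‖)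
    (β : ℝ) (hβ : 0 < β)
    (hinfsup : ∀ q ∈ Qh, ∃ v ∈ Vh, v ≠ 0 ∧ β * ‖q‖ * ‖v‖ ≤ b v q)
    (z : V) :
    ∃ w ∈ Vh, (∀ q ∈ Qh, b w q = b z q) ∧ β * ‖w‖ ≤ Cb * ‖z‖ := by
  classical
  let S : Qh →ₗ[ℝ] Vh :=
    ((InnerProductSpace.toDual ℝ Vh).symm.toLinearEquiv.toLinearMap.comp
      (LinearMap.toContinuousLinearMap.toLinearMap)).comp
      ((LinearMap.domRestrict' Vh).comp (b.flip.domRestrict Qh))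
  let T : Vh →ₗ[ℝ] Qh :=
    ((InnerProductSpace.toDual ℝ Qh).symm.toLinearEquiv.toLinearMap.comp
      (LinearMap.toContinuousLinearMap.toLinearMap)).comp
      ((LinearMap.domRestrict' Qh).comp (b.domRestrict Vh))
  have hS : ∀ (q : Qh) (v : Vh), ⟪S q, v⟫ = b (v : V) (q : Q) := by
    intro q v
    simp [S, InnerProductSpace.toDual_symm_apply]
  have hT : ∀ (v : Vh) (q : Qh), ⟪T v, q⟫ = b (v : V) (q : Q) := by
    intro v q
    simp [T, InnerProductSpace.toDual_symm_apply]
  have hSlow : ∀ p : Qh, β * ‖p‖ ≤ ‖S p‖ := by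
    intro p
    obtain ⟨v, hvVh, hv0, hle⟩ := hinfsup (p : Q) p.2
    have hv : (0 : ℝ) < ‖v‖ := norm_pos_iff.mpr hv0
    have h2 : ⟪S p, (⟨v, hvVh⟩ : Vh)⟫ ≤ ‖S p‖ * ‖(⟨v, hvVh⟩ : Vh)‖ :=
      real_inner_le_norm _ _
    have h3 : ‖(⟨v, hvVh⟩ : Vh)‖ = ‖v‖ := rfl
    have h4 : ‖(p : Q)‖ = ‖p‖ := rfl
    have key : β * ‖p‖ * ‖v‖ ≤ ‖S p‖ * ‖v‖ := by
      calc β * ‖p‖ * ‖v‖ = β * ‖(p : Q)‖ * ‖v‖ := by rw [h4]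
        _ ≤ b v (p : Q) := hle
        _ = ⟪S p, (⟨v, hvVh⟩ : Vh)⟫ := (hS p ⟨v, hvVh⟩).symm
        _ ≤ ‖S p‖ * ‖v‖ := by rw [← h3]; exact h2
    exact le_of_mul_le_mul_right key hv
  have hMinj : Function.Injective (T.comp S) := by
    rw [injective_iff_map_eq_zero]
    intro p hp
    have hTSp : T (S p) = 0 := hp
    have h0 : ⟪S p, S p⟫ = 0 := by
      have h1 := hT (S p) p
      rw [hTSp] at h1
      simp only [inner_zero_left] at h1
      rw [hS p (S p)]
      exact h1.symm
    have hSp0 : S p = 0 := inner_self_eq_zero.mp h0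
    have hb0 : β * ‖p‖ ≤ 0 := by simpa [hSp0] using hSlow p
    have hp0 : ‖p‖ = 0 := by nlinarith [norm_nonneg p]
    exact norm_eq_zero.mp hp0
  have hMsurj : Function.Surjective (T.comp S) :=
    LinearMap.injective_iff_surjective.mp hMinj
  -- Riesz representative of q ↦ b z q on Qh
  let r : Qh := (InnerProductSpace.toDual ℝ Qh).symm
    (LinearMap.toContinuousLinearMap ((b z).domRestrict Qh))
  have hr : ∀ q : Qh, ⟪r, q⟫ = b z (q : Q) := by
    intro q
    simp [r, InnerProductSpace.toDual_symm_apply]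
  have hrbound : ‖r‖ ≤ Cb * ‖z‖ := by
    rcases eq_or_lt_of_le (norm_nonneg r) with h | h
    · rw [← h]; positivity
    · have h1 : ‖r‖ * ‖r‖ = ⟪r, r⟫ := (real_inner_self_eq_norm_mul_norm r).symm
      have h2 : ⟪r, r⟫ = b z (r : Q) := hr r
      have h3 : b z (r : Q) ≤ Cb * ‖z‖ * ‖(r : Q)‖ :=
        le_trans (le_abs_self _) (hb_bdd z (r : Q))
      have h4 : ‖(r : Q)‖ = ‖r‖ := rfl
      have : ‖r‖ * ‖r‖ ≤ (Cb * ‖z‖) * ‖r‖ := by rw [h1, h2]; rw [h4] at h3; linarith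
      exact le_of_mul_le_mul_right this h
  obtain ⟨p, hp⟩ := hMsurj r
  refine ⟨(S p : V), (S p).2, ?_, ?_⟩
  · intro q hq
    have h1 : ⟪T (S p), (⟨q, hq⟩ : Qh)⟫ = b ((S p : Vh) : V) q := hT (S p) ⟨q, hq⟩
    have h2 : ⟪r, (⟨q, hq⟩ : Qh)⟫ = b z q := hr ⟨q, hq⟩
    rw [show T (S p) = r from hp] at h1
    rw [← h1, h2]
  · have h1 : ⟪S p, S p⟫ = b ((S p : Vh) : V) (p : Q) := hS p (S p)
    have h2 : ⟪T (S p), p⟫ = b ((S p : Vh) : V) (p : Q) := hT (S p) p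
    rw [show T (S p) = r from hp] at h2
    have h3 : ⟪r, p⟫ ≤ ‖r‖ * ‖p‖ := real_inner_le_norm _ _
    have h4 : ‖S p‖ * ‖S p‖ = ⟪S p, S p⟫ := (real_inner_self_eq_norm_mul_norm _).symm
    have h5 : β * (‖S p‖ * ‖S p‖) ≤ ‖r‖ * (β * ‖p‖) := by
      rw [h4, h1, ← h2]
      calc β * ⟪r, p⟫ ≤ β * (‖r‖ * ‖p‖) := by
            nlinarith [h3]
        _ = ‖r‖ * (β * ‖p‖) := by ring
    have h6 : ‖r‖ * (β * ‖p‖) ≤ ‖r‖ * ‖S p‖ :=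
      mul_le_mul_of_nonneg_left (hSlow p) (norm_nonneg r)
    have h7 : β * ‖S p‖ * ‖S p‖ ≤ ‖r‖ * ‖S p‖ := by
      calc β * ‖S p‖ * ‖S p‖ = β * (‖S p‖ * ‖S p‖) := by ring
        _ ≤ ‖r‖ * (β * ‖p‖) := h5
        _ ≤ ‖r‖ * ‖S p‖ := h6
    have h8 : β * ‖S p‖ ≤ ‖r‖ := by
      rcases eq_or_lt_of_le (norm_nonneg (S p)) with h | h
      · rw [← h, mul_zero]; exact norm_nonneg r
      · exact le_of_mul_le_mul_right h7 h
    have h9 : ‖((S p : Vh) : V)‖ = ‖S p‖ := rfl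
    rw [h9]
    exact le_trans h8 hrbound
set_option maxHeartbeats 1000000 in
/-- Quasi-optimality (Céa-type estimate) for Galerkin approximation of saddle point
problems: under discrete kernel ellipticity and discrete inf-sup condition, the
error of the discrete solution is bounded by a constant (depending only on `α`,
`β` and the continuity constants of `a` and `b`) times the best approximation
error. -/
theorem stmt8
    {V Q : Type*} [NormedAddCommGroup V] [InnerProductSpace ℝ V] [CompleteSpace V]
    [NormedAddCommGroup Q] [InnerProductSpace ℝ Q] [CompleteSpace Q]
    (Vh : Submodule ℝ V) (Qh : Submodule ℝ Q)
    [FiniteDimensional ℝ Vh] [FiniteDimensional ℝ Qh]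
    (a : V →ₗ[ℝ] V →ₗ[ℝ] ℝ) (b : V →ₗ[ℝ] Q →ₗ[ℝ] ℝ)
    (Ca : ℝ) (hCa : 0 < Ca) (ha_bdd : ∀ u v, |a u v| ≤ Ca * ‖u‖ * ‖v‖)
    (Cb : ℝ) (hCb : 0 < Cb) (hb_bdd : ∀ v q, |b v q| ≤ Cb * ‖v‖ * ‖q‖)
    (α : ℝ) (hα : 0 < α)
    (hcoer : ∀ v ∈ Vh, (∀ q ∈ Qh, b v q = 0) → α * ‖v‖ ^ 2 ≤ a v v)
    (β : ℝ) (hβ : 0 < β)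
    (hinfsup : ∀ q ∈ Qh, ∃ v ∈ Vh, v ≠ 0 ∧ β * ‖q‖ * ‖v‖ ≤ b v q) :
    ∃ C : ℝ, 0 < C ∧
      ∀ (f : V →L[ℝ] ℝ) (g : Q →L[ℝ] ℝ) (u : V) (lam : Q) (uh : V) (lamh : Q),
        uh ∈ Vh → lamh ∈ Qh →
        (∀ v : V, a u v + b v lam = f v) → (∀ q : Q, b u q = g q) →
        (∀ v ∈ Vh, a uh v + b v lamh = f v) → (∀ q ∈ Qh, b uh q = g q) →
        ∀ vh ∈ Vh, ∀ μh ∈ Qh,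
          ‖u - uh‖ + ‖lam - lamh‖ ≤ C * (‖u - vh‖ + ‖lam - μh‖) := by
  refine ⟨(1 + Ca/β) * ((1 + Ca/α) * (1 + Cb/β) + Cb/α) + (1 + Cb/β), by positivity, ?_⟩
  intro f g u lam uh lamh huh hlamh hcu hcg hdu hdg vh hvh μh hμh
  -- Galerkin orthogonality
  have hG1 : ∀ v ∈ Vh, a (u - uh) v = b v (lamh - lam) := by
    intro v hv
    have h1 := hcu v
    have h2 := hdu v hv
    simp only [map_sub, LinearMap.sub_apply]
    linarith
  -- lambda-error auxiliary bound, proven below after u-error pieces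
  -- correction from the inf-sup / surjectivity lemma
  obtain ⟨w, hwVh, hwrep, hwnorm⟩ :=
    aux_surj_s8 Vh Qh b Cb hCb hb_bdd β hβ hinfsup (u - vh)
  set t : V := vh + w with ht
  have htVh : t ∈ Vh := Vh.add_mem hvh hwVh
  have hdVh : uh - t ∈ Vh := Vh.sub_mem huh htVh
  have hdker : ∀ q ∈ Qh, b (uh - t) q = 0 := by
    intro q hq
    have h1 := hcg q
    have h2 := hdg q hq
    have h3 := hwrep q hq
    rw [ht]
    simp only [map_sub, map_add, LinearMap.sub_apply, LinearMap.add_apply] at h3 ⊢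
    linarith
  have hker : α * ‖uh - t‖ ^ 2 ≤ a (uh - t) (uh - t) := hcoer _ hdVh hdker
  have h1 := hG1 (uh - t) hdVh
  have h2 := hdker (μh - lamh) (Qh.sub_mem hμh hlamh)
  have hsplit : a (uh - t) (uh - t) = b (uh - t) (lam - μh) + a (u - t) (uh - t) := by
    simp only [map_sub, LinearMap.sub_apply] at h1 h2 ⊢
    linarith
  have hberr : b (uh - t) (lam - μh) ≤ Cb * ‖uh - t‖ * ‖lam - μh‖ :=
    le_trans (le_abs_self _) (hb_bdd _ _)
  have haerr : a (u - t) (uh - t) ≤ Ca * ‖u - t‖ * ‖uh - t‖ :=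
    le_trans (le_abs_self _) (ha_bdd _ _)
  have hdbound : α * ‖uh - t‖ ≤ Cb * ‖lam - μh‖ + Ca * ‖u - t‖ := by
    rcases eq_or_lt_of_le (norm_nonneg (uh - t)) with h | h
    · rw [← h, mul_zero]; positivity
    · have key : α * ‖uh - t‖ * ‖uh - t‖ ≤
          (Cb * ‖lam - μh‖ + Ca * ‖u - t‖) * ‖uh - t‖ := by
        calc α * ‖uh - t‖ * ‖uh - t‖ = α * ‖uh - t‖ ^ 2 := by ring
          _ ≤ a (uh - t) (uh - t) := hker
          _ = b (uh - t) (lam - μh) + a (u - t) (uh - t) := hsplit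
          _ ≤ Cb * ‖uh - t‖ * ‖lam - μh‖ + Ca * ‖u - t‖ * ‖uh - t‖ := by linarith
          _ = (Cb * ‖lam - μh‖ + Ca * ‖u - t‖) * ‖uh - t‖ := by ring
      exact le_of_mul_le_mul_right key h
  -- lambda bound
  have hA : β * ‖lamh - μh‖ ≤ Ca * ‖u - uh‖ + Cb * ‖lam - μh‖ := by
    obtain ⟨v, hvVh, hv0, hle⟩ := hinfsup (lamh - μh) (Qh.sub_mem hlamh hμh)
    have hv : (0 : ℝ) < ‖v‖ := norm_pos_iff.mpr hv0
    have hg1 := hG1 v hvVh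
    have key0 : b v (lamh - μh) = a (u - uh) v + b v (lam - μh) := by
      simp only [map_sub, LinearMap.sub_apply] at hg1 ⊢
      linarith
    have hb1 : a (u - uh) v ≤ Ca * ‖u - uh‖ * ‖v‖ :=
      le_trans (le_abs_self _) (ha_bdd _ _)
    have hb2 : b v (lam - μh) ≤ Cb * ‖v‖ * ‖lam - μh‖ :=
      le_trans (le_abs_self _) (hb_bdd _ _)
    have key : β * ‖lamh - μh‖ * ‖v‖ ≤ (Ca * ‖u - uh‖ + Cb * ‖lam - μh‖) * ‖v‖ := by
      calc β * ‖lamh - μh‖ * ‖v‖ ≤ b v (lamh - μh) := hle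
        _ = a (u - uh) v + b v (lam - μh) := key0
        _ ≤ Ca * ‖u - uh‖ * ‖v‖ + Cb * ‖v‖ * ‖lam - μh‖ := by linarith
        _ = (Ca * ‖u - uh‖ + Cb * ‖lam - μh‖) * ‖v‖ := by ring
    exact le_of_mul_le_mul_right key hv
  -- triangle inequalities
  have hZ : ‖u - t‖ ≤ ‖u - vh‖ + ‖w‖ := by
    rw [ht, show u - (vh + w) = (u - vh) - w by abel]
    exact norm_sub_le _ _
  have hEu : ‖u - uh‖ ≤ ‖u - t‖ + ‖uh - t‖ := by
    rw [show u - uh = (u - t) - (uh - t) by abel]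
    exact norm_sub_le _ _
  have hEl : ‖lam - lamh‖ ≤ ‖lam - μh‖ + ‖lamh - μh‖ := by
    rw [show lam - lamh = (lam - μh) - (lamh - μh) by abel]
    exact norm_sub_le _ _
  -- assemble, with division bounds
  have hw' : ‖w‖ ≤ Cb / β * ‖u - vh‖ := by
    rw [div_mul_eq_mul_div, le_div_iff₀ hβ]; linarith
  have hZ' : ‖u - t‖ ≤ (1 + Cb / β) * ‖u - vh‖ := by nlinarith [norm_nonneg (u - vh)]
  have hd' : ‖uh - t‖ ≤ Cb / α * ‖lam - μh‖ + Ca / α * ‖u - t‖ := by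
    rw [div_mul_eq_mul_div, div_mul_eq_mul_div, ← add_div, le_div_iff₀ hα]
    linarith
  have hEu' : ‖u - uh‖ ≤
      (1 + Ca / α) * ((1 + Cb / β) * ‖u - vh‖) + Cb / α * ‖lam - μh‖ := by
    have hca : 0 ≤ Ca / α := by positivity
    nlinarith [mul_le_mul_of_nonneg_left hZ' hca]
  have hL' : ‖lamh - μh‖ ≤ Ca / β * ‖u - uh‖ + Cb / β * ‖lam - μh‖ := by
    rw [div_mul_eq_mul_div, div_mul_eq_mul_div, ← add_div, le_div_iff₀ hβ]
    linarith
  have hfin : ‖u - uh‖ + ‖lam - lamh‖ ≤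
      (1 + Ca / β) * ‖u - uh‖ + (1 + Cb / β) * ‖lam - μh‖ := by nlinarith
  have hpos : (0 : ℝ) ≤ 1 + Ca / β := by positivity
  have hEu2 := mul_le_mul_of_nonneg_left hEu' hpos
  have hx1 : (0:ℝ) ≤ (1 + Ca/β) * (Cb/α) * ‖u - vh‖ :=
    mul_nonneg (mul_nonneg hpos (by positivity)) (norm_nonneg _)
  have hx2 : (0:ℝ) ≤ (1 + Cb/β) * ‖u - vh‖ :=
    mul_nonneg (by positivity) (norm_nonneg _)
  have hx3 : (0:ℝ) ≤ (1 + Ca/β) * ((1 + Ca/α) * (1 + Cb/β)) * ‖lam - μh‖ :=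
    mul_nonneg (mul_nonneg hpos (by positivity)) (norm_nonneg _)
  nlinarith [hfin, hEu2, hx1, hx2, hx3]
end

section
/- Let V be a Hilbert space, a : V × V → ℝ a bounded bilinear form that is coercive (with constant α > 0) on a closed subspace K ⊂ V, and suppose K = ker B where B : V → Q* is the bounded operator associated with a bilinear form b satisfying the inf-sup condition with constant β > 0. Then the homogeneous saddle point problem (a(u,v) + b(v,λ) = 0 for all v, b(u,q) = 0 for all q) has only the trivial solution (u, λ) = (0, 0). -/
/-- Uniqueness part of the Babuška–Brezzi theorem: if `a` is bounded and coercive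
on the kernel `K = ker B` of the bilinear form `b`, and `b` satisfies the inf-sup
condition, then the homogeneous saddle point problem has only the trivial
solution. -/
theorem stmt17 {V Q : Type*}
    [NormedAddCommGroup V] [InnerProductSpace ℝ V] [CompleteSpace V]
    [NormedAddCommGroup Q] [InnerProductSpace ℝ Q] [CompleteSpace Q]
    (a : V →ₗ[ℝ] V →ₗ[ℝ] ℝ) (b : V →ₗ[ℝ] Q →ₗ[ℝ] ℝ)
    (Ca : ℝ) (hCa : 0 < Ca) (ha_bdd : ∀ u v, |a u v| ≤ Ca * ‖u‖ * ‖v‖)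
    (α : ℝ) (hα : 0 < α)
    (hcoer : ∀ v : V, (∀ q : Q, b v q = 0) → α * ‖v‖ ^ 2 ≤ a v v)
    (β : ℝ) (hβ : 0 < β)
    (hinfsup : ∀ q : Q, ∃ v : V, v ≠ 0 ∧ β * ‖q‖ * ‖v‖ ≤ b v q) :
    ∀ (u : V) (lam : Q),
      (∀ v : V, a u v + b v lam = 0) → (∀ q : Q, b u q = 0) →
      u = 0 ∧ lam = 0 := by
  intro u lam h1 h2
  have hu : u = 0 := by
    have hauu : a u u = 0 := by
      have := h1 u
      have hb : b u lam = 0 := h2 lam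
      linarith
    have hc := hcoer u h2
    have : ‖u‖ ^ 2 ≤ 0 := by nlinarith [sq_nonneg ‖u‖]
    have : ‖u‖ = 0 := by nlinarith [sq_nonneg ‖u‖, norm_nonneg u]
    simpa using this
  subst hu
  refine ⟨rfl, ?_⟩
  obtain ⟨v, hv0, hv⟩ := hinfsup lam
  have hbz : b v lam = 0 := by
    have := h1 v
    simpa using this
  have hvpos : 0 < ‖v‖ := norm_pos_iff.mpr hv0
  have : ‖lam‖ ≤ 0 := by
    by_contra h
    push_neg at h
    nlinarith [mul_pos (mul_pos hβ h) hvpos]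
  simpa using le_antisymm this (norm_nonneg lam)
end
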